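/- arXiv:2508.11055 — 2 statements merged into one kernel-verified Lean document; each statement's English description precedes it below -/
import Mathlib

section
/- Let D, ω, ε > 0 and η ∈ ℝ, and let B : ℝ² → ℝ be twice continuously differentiable, ρ : ℝ² → ℝ and A^st : ℝ² → ℝ any functions, with A = A^st + B. For Δt > 0 set h = √(DΔt) and θ = ε/Δt, and define the one-step attractiveness update at x ∈ ℝ² by U_{Δt}(x) = [B(x) + (η h²/4)·Δ_h B(x)]·(1 − ωΔt) + θ·h²·ρ(x)·(1 − e^{−A(x)Δt}). Then for every x ∈ ℝ², lim_{Δt → 0⁺} (U_{Δt}(x) − B(x))/Δt = (ηD/4)·ΔB(x) − ω·B(x) + εD·ρ(x)·A(x), where ΔB is the (continuous) Laplacian of B. -/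
open Filter Set Real


/-- First partial derivative of `f : ℝ² → ℝ` (direction `e₁`). -/
noncomputable def pd1 (f : ℝ × ℝ → ℝ) (x : ℝ × ℝ) : ℝ := fderiv ℝ f x (1, 0)

/-- Second partial derivative of `f : ℝ² → ℝ` (direction `e₂`). -/
noncomputable def pd2 (f : ℝ × ℝ → ℝ) (x : ℝ × ℝ) : ℝ := fderiv ℝ f x (0, 1)

/-- Continuous Laplacian `Δf = ∂₁₁f + ∂₂₂f` of `f : ℝ² → ℝ`. -/
noncomputable def lapl (f : ℝ × ℝ → ℝ) (x : ℝ × ℝ) : ℝ :=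
  pd1 (pd1 f) x + pd2 (pd2 f) x

/-- Discrete 5-point Laplacian with mesh size `h`:
`Δ_h f(x) = h⁻²(f(x+he₁)+f(x−he₁)+f(x+he₂)+f(x−he₂) − 4f(x))`. -/
noncomputable def discLap (h : ℝ) (f : ℝ × ℝ → ℝ) (x : ℝ × ℝ) : ℝ :=
  (f (x.1 + h, x.2) + f (x.1 - h, x.2) + f (x.1, x.2 + h) + f (x.1, x.2 - h)
    - 4 * f x) / h ^ 2

/-- Second symmetric difference quotient of a C² function of one real variable. -/
lemma sym2 (g : ℝ → ℝ) (hg : ContDiff ℝ 2 g) :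
    Tendsto (fun h : ℝ => (g h + g (-h) - 2 * g 0) / h ^ 2) (nhdsWithin 0 (Ioi 0))
      (nhds (deriv (deriv g) 0)) := by
  have hgd : Differentiable ℝ g := hg.differentiable two_ne_zero
  have hg' : Differentiable ℝ (deriv g) :=
    (hg.iterate_deriv' 1 1).differentiable (by norm_num)
  -- limit of f'/φ'
  have hslope : Tendsto (fun h : ℝ => (deriv g h - deriv g (-h)) / (2 * h))
      (nhdsWithin 0 (Ioi 0)) (nhds (deriv (deriv g) 0)) := by
    have hd : HasDerivAt (deriv g) (deriv (deriv g) 0) 0 := (hg' 0).hasDerivAt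
    have hs := hasDerivAt_iff_tendsto_slope.mp hd
    have h1 : Tendsto (fun h : ℝ => slope (deriv g) 0 h) (nhdsWithin 0 (Ioi 0))
        (nhds (deriv (deriv g) 0)) :=
      hs.mono_left (nhdsWithin_mono 0 (by intro y hy; exact ne_of_gt hy))
    have hneg : Tendsto (fun h : ℝ => -h) (nhdsWithin (0:ℝ) (Ioi 0))
        (nhdsWithin (0:ℝ) {(0:ℝ)}ᶜ) := by
      apply tendsto_nhdsWithin_of_tendsto_nhds_of_eventually_within
      · simpa using (continuous_neg.tendsto (0:ℝ)).mono_left nhdsWithin_le_nhds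
      · filter_upwards [self_mem_nhdsWithin] with y hy
        simpa using ne_of_gt hy
    have h2 : Tendsto (fun h : ℝ => slope (deriv g) 0 (-h)) (nhdsWithin 0 (Ioi 0))
        (nhds (deriv (deriv g) 0)) := hs.comp hneg
    have h3 := (h1.add h2).div_const 2
    rw [show (deriv (deriv g) 0 + deriv (deriv g) 0) / 2 = deriv (deriv g) 0 by ring] at h3
    refine h3.congr' ?_
    filter_upwards [self_mem_nhdsWithin] with h hh
    have hh0 : h ≠ 0 := ne_of_gt hh
    rw [slope_def_field, slope_def_field,
      show h - (0:ℝ) = h by ring, show -h - (0:ℝ) = -h by ring,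
      div_add_div _ _ hh0 (neg_ne_zero.mpr hh0)]
    field_simp
    ring
  have := HasDerivAt.lhopital_zero_right_on_Ioo (a := (0:ℝ)) (b := 1)
    (f := fun h => g h + g (-h) - 2 * g 0)
    (f' := fun h => deriv g h - deriv g (-h))
    (g := fun h => h ^ 2) (g' := fun h => 2 * h) one_pos
    (fun y hy => by
      have h1 : HasDerivAt g (deriv g y) y := (hgd y).hasDerivAt
      have h2 : HasDerivAt (fun h : ℝ => g (-h)) (-deriv g (-y)) y := by
        have := ((hgd (-y)).hasDerivAt).comp y (hasDerivAt_neg y)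
        simpa [Function.comp_def] using this
      simpa [sub_eq_add_neg] using (h1.add h2).sub_const (2 * g 0))
    (fun y hy => by simpa using hasDerivAt_pow 2 y)
    (fun y hy => by have := hy.1; positivity)
    (by
      have : Tendsto (fun h : ℝ => g h + g (-h) - 2 * g 0) (nhds 0)
          (nhds (g 0 + g (-0) - 2 * g 0)) := by
        exact ((hgd.continuous.tendsto 0).add
          ((hgd.continuous.tendsto (-0)).comp (continuous_neg.tendsto 0))).sub tendsto_const_nhds
      simp only [neg_zero] at this
      rw [show g 0 + g 0 - 2 * g 0 = 0 by ring] at this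
      exact this.mono_left nhdsWithin_le_nhds)
    (by
      have : Tendsto (fun h : ℝ => h ^ 2) (nhds (0:ℝ)) (nhds ((0:ℝ) ^ 2)) :=
        (continuous_pow 2).tendsto 0
      simpa using this.mono_left nhdsWithin_le_nhds)
    hslope
  exact this

/-- Directional second difference quotient for `f : ℝ × ℝ → ℝ`. -/
lemma dirlim (f : ℝ × ℝ → ℝ) (hf : ContDiff ℝ 2 f) (x v : ℝ × ℝ) :
    Tendsto (fun h : ℝ => (f (x + h • v) + f (x - h • v) - 2 * f x) / h ^ 2)
      (nhdsWithin 0 (Ioi 0))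
      (nhds (fderiv ℝ (fun y => fderiv ℝ f y v) x v)) := by
  set γ : ℝ → ℝ × ℝ := fun t => x + t • v with hγ
  have hγd : ∀ t : ℝ, HasDerivAt γ v t := by
    intro t
    have : HasDerivAt (fun t : ℝ => t • v) ((1:ℝ) • v) t :=
      (hasDerivAt_id t).smul_const v
    simpa [γ] using this.const_add x
  have hγc : ContDiff ℝ 2 γ := contDiff_const.add (contDiff_id.smul contDiff_const)
  set g : ℝ → ℝ := fun t => f (γ t) with hgdef
  have hg : ContDiff ℝ 2 g := hf.comp hγc
  set p : ℝ × ℝ → ℝ := fun y => fderiv ℝ f y v with hp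
  have hpc : ContDiff ℝ 1 p := by
    have : ContDiff ℝ 1 (fderiv ℝ f) := hf.fderiv_right (by norm_num)
    exact this.clm_apply contDiff_const
  have hderiv : ∀ t : ℝ, HasDerivAt g (p (γ t)) t := by
    intro t
    exact ((hf.differentiable two_ne_zero (γ t)).hasFDerivAt).comp_hasDerivAt t (hγd t)
  have hdg : deriv g = fun t => p (γ t) := funext fun t => (hderiv t).deriv
  have hd2 : deriv (deriv g) 0 = fderiv ℝ p x v := by
    rw [hdg]
    have : HasDerivAt (fun t => p (γ t)) (fderiv ℝ p x v) 0 := by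
      have h1 : HasFDerivAt p (fderiv ℝ p x) (γ 0) := by
        rw [show γ 0 = x by simp [γ]]
        exact (hpc.differentiable one_ne_zero x).hasFDerivAt
      exact h1.comp_hasDerivAt 0 (hγd 0)
    exact this.deriv
  have := sym2 g hg
  rw [hd2] at this
  refine this.congr fun h => ?_
  have e1 : g h = f (x + h • v) := rfl
  have e2 : g (-h) = f (x - h • v) := by simp [g, γ, sub_eq_add_neg]
  have e3 : g 0 = f x := by simp [g, γ]
  rw [e1, e2, e3]

/-- Convergence of the discrete 5-point Laplacian to the continuous Laplacian. -/
lemma discLap_tendsto (f : ℝ × ℝ → ℝ) (hf : ContDiff ℝ 2 f) (x : ℝ × ℝ) :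
    Tendsto (fun h : ℝ => discLap h f x) (nhdsWithin 0 (Ioi 0)) (nhds (lapl f x)) := by
  have h1 := dirlim f hf x (1, 0)
  have h2 := dirlim f hf x (0, 1)
  have := h1.add h2
  refine this.congr fun h => ?_
  have e1 : x + h • ((1:ℝ), (0:ℝ)) = (x.1 + h, x.2) := by
    simp [Prod.ext_iff]
  have e2 : x - h • ((1:ℝ), (0:ℝ)) = (x.1 - h, x.2) := by
    simp [Prod.ext_iff]
  have e3 : x + h • ((0:ℝ), (1:ℝ)) = (x.1, x.2 + h) := by
    simp [Prod.ext_iff]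
  have e4 : x - h • ((0:ℝ), (1:ℝ)) = (x.1, x.2 - h) := by
    simp [Prod.ext_iff]
  rw [e1, e2, e3, e4]
  simp only [discLap]
  ring

/-- Mean-field limit of the agent-based attractiveness update. -/
theorem stmt4 (D ω ε η : ℝ) (hD : 0 < D) (hω : 0 < ω) (hε : 0 < ε)
    (B ρ Ast : ℝ × ℝ → ℝ) (hB : ContDiff ℝ 2 B)
    (A : ℝ × ℝ → ℝ) (hA : A = fun x => Ast x + B x)
    (U : ℝ → (ℝ × ℝ) → ℝ)
    (hU : U = fun Δt x =>
      (B x + η * Real.sqrt (D * Δt) ^ 2 / 4 * discLap (Real.sqrt (D * Δt)) B x)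
          * (1 - ω * Δt)
        + (ε / Δt) * Real.sqrt (D * Δt) ^ 2 * ρ x * (1 - Real.exp (-A x * Δt)))
    (x : ℝ × ℝ) :
    Filter.Tendsto (fun Δt : ℝ => (U Δt x - B x) / Δt)
      (nhdsWithin (0 : ℝ) (Set.Ioi 0))
      (nhds (η * D / 4 * lapl B x - ω * B x + ε * D * ρ x * A x)) := by
  -- substitution `Δt ↦ √(DΔt)` tends to `0⁺`
  have hsqrt : Tendsto (fun Δt : ℝ => Real.sqrt (D * Δt)) (nhdsWithin 0 (Ioi 0))
      (nhdsWithin 0 (Ioi 0)) := by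
    apply tendsto_nhdsWithin_of_tendsto_nhds_of_eventually_within
    · have : Tendsto (fun Δt : ℝ => Real.sqrt (D * Δt)) (nhds 0) (nhds (Real.sqrt (D * 0))) :=
        (Real.continuous_sqrt.comp (continuous_const.mul continuous_id)).tendsto 0
      simpa using this.mono_left nhdsWithin_le_nhds
    · filter_upwards [self_mem_nhdsWithin] with Δt hΔt
      exact Real.sqrt_pos.mpr (mul_pos hD hΔt)
  -- limit of the discrete Laplacian term
  have hlap : Tendsto (fun Δt : ℝ => discLap (Real.sqrt (D * Δt)) B x)
      (nhdsWithin 0 (Ioi 0)) (nhds (lapl B x)) :=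
    (discLap_tendsto B hB x).comp hsqrt
  -- limit of the exponential term quotient
  have hexp : Tendsto (fun Δt : ℝ => (1 - Real.exp (-A x * Δt)) / Δt)
      (nhdsWithin 0 (Ioi 0)) (nhds (A x)) := by
    have hd : HasDerivAt (fun t : ℝ => 1 - Real.exp (-A x * t)) (A x) 0 := by
      have h1 : HasDerivAt (fun t : ℝ => -A x * t) (-A x) 0 := by
        simpa using (hasDerivAt_id (0:ℝ)).const_mul (-A x)
      have h2 := (Real.hasDerivAt_exp ((-A x) * 0)).comp 0 h1
      have h3 := h2.const_sub 1
      simpa using h3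
    have hs := hasDerivAt_iff_tendsto_slope.mp hd
    have := hs.mono_left (nhdsWithin_mono 0 (fun y hy => ne_of_gt hy))
    refine this.congr fun h => ?_
    simp [slope_def_field]
  -- eventual identity for the difference quotient
  have hev : ∀ᶠ Δt in nhdsWithin (0:ℝ) (Ioi 0),
      (U Δt x - B x) / Δt
        = -(ω * B x) + η * D / 4 * discLap (Real.sqrt (D * Δt)) B x * (1 - ω * Δt)
          + ε * D * ρ x * ((1 - Real.exp (-A x * Δt)) / Δt) := by
    filter_upwards [self_mem_nhdsWithin] with Δt hΔt
    have hΔt' : (0:ℝ) < Δt := hΔt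
    have hΔt0 : (Δt:ℝ) ≠ 0 := ne_of_gt hΔt
    have hsq : Real.sqrt (D * Δt) ^ 2 = D * Δt :=
      Real.sq_sqrt (by positivity)
    rw [hU]
    simp only [hsq]
    field_simp
    ring
  -- combine
  have hmain : Tendsto (fun Δt : ℝ =>
      -(ω * B x) + η * D / 4 * discLap (Real.sqrt (D * Δt)) B x * (1 - ω * Δt)
        + ε * D * ρ x * ((1 - Real.exp (-A x * Δt)) / Δt))
      (nhdsWithin (0:ℝ) (Ioi 0))
      (nhds (-(ω * B x) + η * D / 4 * lapl B x * (1 - ω * 0) + ε * D * ρ x * A x)) := by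
    have hω' : Tendsto (fun Δt : ℝ => 1 - ω * Δt) (nhdsWithin (0:ℝ) (Ioi 0))
        (nhds (1 - ω * 0)) :=
      ((continuous_const.sub (continuous_const.mul continuous_id)).tendsto 0).mono_left
        nhdsWithin_le_nhds
    exact (tendsto_const_nhds.add ((hlap.const_mul _).mul hω')).add (hexp.const_mul _)
  have : -(ω * B x) + η * D / 4 * lapl B x * (1 - ω * 0) + ε * D * ρ x * A x
      = η * D / 4 * lapl B x - ω * B x + ε * D * ρ x * A x := by ring
  rw [this] at hmain
  exact hmain.congr' (Filter.EventuallyEq.symm hev)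
end

section
/- Let D, Γ̂ (:= γ) ∈ ℝ with D > 0, and let A : ℝ² → ℝ and ρ : ℝ² → ℝ be three times continuously differentiable with A(x) > 0 for all x. For Δt > 0 set h = √(DΔt), define T_h(y) = Σ_{j ∈ {±1,±2}} A(y + h e_j), and define the one-step density update at x ∈ ℝ² by ρ⁺_{Δt}(x) = A(x) · Σ_{i ∈ {±1,±2}} [ ρ(x + h e_i)·e^{−A(x + h e_i)Δt} / T_h(x + h e_i) ] + γΔt. Then for every x ∈ ℝ², lim_{Δt → 0⁺} (ρ⁺_{Δt}(x) − ρ(x))/Δt = (D/4)·∇·(∇ρ − (2ρ/A)∇A)(x) − ρ(x)·A(x) + γ. -/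
noncomputable def dv (v : ℝ × ℝ) (F : ℝ × ℝ → ℝ) (y : ℝ × ℝ) : ℝ := fderiv ℝ F y v

lemma dv_eval (c₁ c₂ : ℝ) (F : ℝ × ℝ → ℝ) (y : ℝ × ℝ) :
    dv (c₁, c₂) F y = c₁ * pd1 F y + c₂ * pd2 F y := by
  have h : ((c₁, c₂) : ℝ × ℝ) = c₁ • ((1:ℝ), (0:ℝ)) + c₂ • ((0:ℝ), (1:ℝ)) := by
    simp [Prod.ext_iff]
  rw [dv, h, map_add, map_smul, map_smul]
  simp [pd1, pd2]

lemma dv_contDiff {n : ℕ} (v : ℝ × ℝ) {F : ℝ × ℝ → ℝ} (hF : ContDiff ℝ (n+1 : ℕ) F) :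
    ContDiff ℝ n (dv v F) := by
  have : ContDiff ℝ n (fderiv ℝ F) := hF.fderiv_right (by norm_cast)
  exact this.clm_apply contDiff_const

lemma line_hasDerivAt {F : ℝ × ℝ → ℝ} (hF : Differentiable ℝ F) (c₁ c₂ : ℝ) (x : ℝ × ℝ)
    (h : ℝ) :
    HasDerivAt (fun s : ℝ => F (x.1 + c₁ * s, x.2 + c₂ * s))
      (dv (c₁, c₂) F (x.1 + c₁ * h, x.2 + c₂ * h)) h := by
  have h1 : HasDerivAt (fun s : ℝ => x.1 + c₁ * s) c₁ h := by
    simpa using ((hasDerivAt_id h).const_mul c₁).const_add x.1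
  have h2 : HasDerivAt (fun s : ℝ => x.2 + c₂ * s) c₂ h := by
    simpa using ((hasDerivAt_id h).const_mul c₂).const_add x.2
  have hp : HasDerivAt (fun s : ℝ => ((x.1 + c₁ * s, x.2 + c₂ * s) : ℝ × ℝ)) (c₁, c₂) h :=
    h1.prodMk h2
  exact (hF (x.1 + c₁ * h, x.2 + c₂ * h)).hasFDerivAt.comp_hasDerivAt h hp

lemma dv_sub {f g : ℝ × ℝ → ℝ} {x : ℝ × ℝ} (v : ℝ × ℝ)
    (hf : DifferentiableAt ℝ f x) (hg : DifferentiableAt ℝ g x) :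
    dv v (fun y => f y - g y) x = dv v f x - dv v g x := by
  simp [dv, fderiv_fun_sub hf hg]

lemma dv_add {f g : ℝ × ℝ → ℝ} {x : ℝ × ℝ} (v : ℝ × ℝ)
    (hf : DifferentiableAt ℝ f x) (hg : DifferentiableAt ℝ g x) :
    dv v (fun y => f y + g y) x = dv v f x + dv v g x := by
  simp [dv, fderiv_fun_add hf hg]

lemma dv_const_mul {f : ℝ × ℝ → ℝ} {x : ℝ × ℝ} (v : ℝ × ℝ) (c : ℝ)
    (hf : DifferentiableAt ℝ f x) :
    dv v (fun y => c * f y) x = c * dv v f x := by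
  simp [dv, fderiv_const_mul hf c]

lemma dv_mul {f g : ℝ × ℝ → ℝ} {x : ℝ × ℝ} (v : ℝ × ℝ)
    (hf : DifferentiableAt ℝ f x) (hg : DifferentiableAt ℝ g x) :
    dv v (fun y => f y * g y) x = dv v f x * g x + f x * dv v g x := by
  simp [dv, fderiv_fun_mul hf hg]; ring

lemma dv_inv {f : ℝ × ℝ → ℝ} {x : ℝ × ℝ} (v : ℝ × ℝ)
    (hf : DifferentiableAt ℝ f x) (hx : f x ≠ 0) :
    dv v (fun y => (f y)⁻¹) x = -dv v f x / (f x) ^ 2 := by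
  have h := (hasFDerivAt_inv hx).comp x hf.hasFDerivAt
  have h' : HasFDerivAt (fun y => (f y)⁻¹)
      ((ContinuousLinearMap.smulRight 1 (-(f x ^ 2)⁻¹)).comp (fderiv ℝ f x)) x := h
  rw [dv, h'.fderiv]
  simp [dv, ContinuousLinearMap.smulRight_apply]
  ring

lemma dv_zero (F : ℝ × ℝ → ℝ) (y : ℝ × ℝ) : dv (0, 0) F y = 0 := by
  have : ((0,0) : ℝ × ℝ) = 0 := rfl
  simp [dv, this]

lemma gen1 (D C : ℝ) (u a w u₁ a₁ w₁ : ℝ → ℝ)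
    (hu : ∀ s, HasDerivAt u (u₁ s) s) (ha : ∀ s, HasDerivAt a (a₁ s) s)
    (hw : ∀ s, HasDerivAt w (w₁ s) s) (hwne : ∀ s, w s ≠ 0) (h : ℝ) :
    HasDerivAt (fun s => C * (u s * Real.exp (-a s * (s^2/D)) / w s))
      (C * (((u₁ h * Real.exp (-a h * (h^2/D))
            + u h * (-(a₁ h * (h^2/D) + a h * (2*h/D)) * Real.exp (-a h * (h^2/D)))) * w h
          - u h * Real.exp (-a h * (h^2/D)) * w₁ h) / (w h)^2)) h := by
  have hexp : HasDerivAt (fun s => -a s * (s^2/D))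
      (-(a₁ h) * (h^2/D) + -a h * (2*h^1/D)) h := by
    have := (ha h).fun_neg.fun_mul ((hasDerivAt_pow 2 h).div_const D)
    refine this.congr_deriv ?_ <;> (try push_cast) <;> (try ring)
  have hE : HasDerivAt (fun s => Real.exp (-a s * (s^2/D)))
      (Real.exp (-a h * (h^2/D)) * (-(a₁ h) * (h^2/D) + -a h * (2*h^1/D))) h := hexp.exp
  have := (((hu h).fun_mul hE).fun_div (hw h) (hwne h)).const_mul C
  refine this.congr_deriv ?_
  field_simp
  ring

lemma gen2 (D C : ℝ) (u a w u₁ a₁ w₁ : ℝ → ℝ) (u₂ a₂ w₂ : ℝ)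
    (hu : ∀ s, HasDerivAt u (u₁ s) s) (ha : ∀ s, HasDerivAt a (a₁ s) s)
    (hw : ∀ s, HasDerivAt w (w₁ s) s) (hwne : ∀ s, w s ≠ 0)
    (hu₁ : HasDerivAt u₁ u₂ 0) (ha₁ : HasDerivAt a₁ a₂ 0) (hw₁ : HasDerivAt w₁ w₂ 0)
    (hD : D ≠ 0) :
    HasDerivAt (fun h => C * (((u₁ h * Real.exp (-a h * (h^2/D))
            + u h * (-(a₁ h * (h^2/D) + a h * (2*h/D)) * Real.exp (-a h * (h^2/D)))) * w h
          - u h * Real.exp (-a h * (h^2/D)) * w₁ h) / (w h)^2))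
      (C * ((u₂ - u 0 * (2 * a 0 / D)) / w 0 - 2 * u₁ 0 * w₁ 0 / (w 0)^2
          - u 0 * w₂ / (w 0)^2 + 2 * u 0 * (w₁ 0)^2 / (w 0)^3)) 0 := by
  have hexp : HasDerivAt (fun s => -a s * (s^2/D))
      (-(a₁ 0) * ((0:ℝ)^2/D) + -a 0 * (2*(0:ℝ)^1/D)) 0 := by
    have := (ha 0).fun_neg.fun_mul ((hasDerivAt_pow 2 (0:ℝ)).div_const D)
    refine this.congr_deriv ?_ <;> (try push_cast) <;> (try ring)
  have hE : HasDerivAt (fun s => Real.exp (-a s * (s^2/D)))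
      (Real.exp (-a 0 * ((0:ℝ)^2/D)) * (-(a₁ 0) * ((0:ℝ)^2/D) + -a 0 * (2*(0:ℝ)^1/D))) 0 :=
    hexp.exp
  have hin : HasDerivAt (fun s => -(a₁ s * (s^2/D) + a s * (2*s/D)))
      (-((a₂ * ((0:ℝ)^2/D) + a₁ 0 * (2*(0:ℝ)^1/D)) + (a₁ 0 * (2*(0:ℝ)/D) + a 0 * (2/D)))) 0 := by
    have h1 : HasDerivAt (fun s : ℝ => a₁ s * (s^2/D))
        (a₂ * ((0:ℝ)^2/D) + a₁ 0 * (2*(0:ℝ)^1/D)) 0 := by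
      have := ha₁.fun_mul ((hasDerivAt_pow 2 (0:ℝ)).div_const D)
      refine this.congr_deriv ?_ <;> (try push_cast) <;> (try ring)
    have h2 : HasDerivAt (fun s : ℝ => a s * (2*s/D)) (a₁ 0 * (2*(0:ℝ)/D) + a 0 * (2/D)) 0 := by
      have hlin : HasDerivAt (fun s : ℝ => 2*s/D) (2/D) 0 := by
        simpa using ((hasDerivAt_id (0:ℝ)).const_mul 2).div_const D
      exact (ha 0).fun_mul hlin
    exact (h1.fun_add h2).fun_neg
  have hE₁ : HasDerivAt (fun s => -(a₁ s * (s^2/D) + a s * (2*s/D)) * Real.exp (-a s * (s^2/D)))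
      ((-((a₂ * ((0:ℝ)^2/D) + a₁ 0 * (2*(0:ℝ)^1/D)) + (a₁ 0 * (2*(0:ℝ)/D) + a 0 * (2/D)))) *
          Real.exp (-a 0 * ((0:ℝ)^2/D))
        + (-(a₁ 0 * ((0:ℝ)^2/D) + a 0 * (2*(0:ℝ)/D))) *
          (Real.exp (-a 0 * ((0:ℝ)^2/D)) * (-(a₁ 0) * ((0:ℝ)^2/D) + -a 0 * (2*(0:ℝ)^1/D)))) 0 :=
    hin.mul hE
  have hnum := (((hu₁.fun_mul hE).fun_add ((hu 0).fun_mul hE₁)).fun_mul (hw 0)).fun_sub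
    (((hu 0).fun_mul hE).fun_mul hw₁)
  have hden := (hw 0).fun_pow 2
  have := (hnum.fun_div hden (pow_ne_zero 2 (hwne 0))).const_mul C
  refine this.congr_deriv ?_
  have e0 : Real.exp (-a 0 * ((0:ℝ)^2/D)) = 1 := by norm_num
  rw [e0]
  have hw0 : w 0 ≠ 0 := hwne 0
  field_simp
  ring
lemma dirterm (D : ℝ) (hD : D ≠ 0) (A ρ : ℝ × ℝ → ℝ) (hA : ContDiff ℝ 3 A)
    (hρ : ContDiff ℝ 3 ρ) (hApos : ∀ y, 0 < A y) (x : ℝ × ℝ) (c₁ c₂ : ℝ) :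
    ∃ F F₁ : ℝ → ℝ,
      (∀ h, F h = A x * (ρ (x.1 + c₁*h, x.2 + c₂*h)
            * Real.exp (-A (x.1 + c₁*h, x.2 + c₂*h) * (h^2/D))
            / (A (x.1 + (c₁+1)*h, x.2 + c₂*h) + A (x.1 + (c₁-1)*h, x.2 + c₂*h)
              + A (x.1 + c₁*h, x.2 + (c₂+1)*h) + A (x.1 + c₁*h, x.2 + (c₂-1)*h))))
      ∧ (∀ h, HasDerivAt F (F₁ h) h)
      ∧ F₁ 0 = A x * ((dv (c₁,c₂) ρ x * (4 * A x) - ρ x *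
            (dv (c₁+1,c₂) A x + dv (c₁-1,c₂) A x + dv (c₁,c₂+1) A x + dv (c₁,c₂-1) A x))
            / (4 * A x)^2)
      ∧ HasDerivAt F₁ (A x * ((dv (c₁,c₂) (dv (c₁,c₂) ρ) x - ρ x * (2 * A x / D)) / (4 * A x)
          - 2 * dv (c₁,c₂) ρ x *
            (dv (c₁+1,c₂) A x + dv (c₁-1,c₂) A x + dv (c₁,c₂+1) A x + dv (c₁,c₂-1) A x)
            / (4 * A x)^2
          - ρ x * (dv (c₁+1,c₂) (dv (c₁+1,c₂) A) x + dv (c₁-1,c₂) (dv (c₁-1,c₂) A) x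
              + dv (c₁,c₂+1) (dv (c₁,c₂+1) A) x + dv (c₁,c₂-1) (dv (c₁,c₂-1) A) x)
            / (4 * A x)^2
          + 2 * ρ x *
            (dv (c₁+1,c₂) A x + dv (c₁-1,c₂) A x + dv (c₁,c₂+1) A x + dv (c₁,c₂-1) A x)^2
            / (4 * A x)^3)) 0 := by
  have hAd : Differentiable ℝ A := hA.differentiable (by norm_num)
  have hρd : Differentiable ℝ ρ := hρ.differentiable (by norm_num)
  have hA3 : ContDiff ℝ ((2:ℕ)+1 : ℕ) A := by exact_mod_cast hA
  have hρ3 : ContDiff ℝ ((2:ℕ)+1 : ℕ) ρ := by exact_mod_cast hρ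
  have hdvA : ∀ v : ℝ × ℝ, Differentiable ℝ (dv v A) := fun v =>
    (dv_contDiff (n := 2) v hA3).differentiable (by norm_num)
  have hdvρ : ∀ v : ℝ × ℝ, Differentiable ℝ (dv v ρ) := fun v =>
    (dv_contDiff (n := 2) v hρ3).differentiable (by norm_num)
  have hu : ∀ s : ℝ, HasDerivAt (fun s : ℝ => ρ (x.1 + c₁ * s, x.2 + c₂ * s))
      ((fun s : ℝ => dv (c₁, c₂) ρ (x.1 + c₁ * s, x.2 + c₂ * s)) s) s :=
    fun s => line_hasDerivAt hρd c₁ c₂ x s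
  have ha : ∀ s : ℝ, HasDerivAt (fun s : ℝ => A (x.1 + c₁ * s, x.2 + c₂ * s))
      ((fun s : ℝ => dv (c₁, c₂) A (x.1 + c₁ * s, x.2 + c₂ * s)) s) s :=
    fun s => line_hasDerivAt hAd c₁ c₂ x s
  have hw : ∀ s : ℝ, HasDerivAt (fun s : ℝ =>
        A (x.1 + (c₁+1) * s, x.2 + c₂ * s) + A (x.1 + (c₁-1) * s, x.2 + c₂ * s)
        + A (x.1 + c₁ * s, x.2 + (c₂+1) * s) + A (x.1 + c₁ * s, x.2 + (c₂-1) * s))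
      ((fun s : ℝ => dv (c₁+1, c₂) A (x.1 + (c₁+1) * s, x.2 + c₂ * s)
        + dv (c₁-1, c₂) A (x.1 + (c₁-1) * s, x.2 + c₂ * s)
        + dv (c₁, c₂+1) A (x.1 + c₁ * s, x.2 + (c₂+1) * s)
        + dv (c₁, c₂-1) A (x.1 + c₁ * s, x.2 + (c₂-1) * s)) s) s :=
    fun s => (((line_hasDerivAt hAd (c₁+1) c₂ x s).add (line_hasDerivAt hAd (c₁-1) c₂ x s)).add
      (line_hasDerivAt hAd c₁ (c₂+1) x s)).add (line_hasDerivAt hAd c₁ (c₂-1) x s)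
  have hwne : ∀ s : ℝ, (A (x.1 + (c₁+1) * s, x.2 + c₂ * s) + A (x.1 + (c₁-1) * s, x.2 + c₂ * s)
        + A (x.1 + c₁ * s, x.2 + (c₂+1) * s) + A (x.1 + c₁ * s, x.2 + (c₂-1) * s)) ≠ 0 :=
    fun s => (add_pos (add_pos (add_pos (hApos _) (hApos _)) (hApos _)) (hApos _)).ne'
  have hu₁ : HasDerivAt (fun s : ℝ => dv (c₁, c₂) ρ (x.1 + c₁ * s, x.2 + c₂ * s))
      (dv (c₁,c₂) (dv (c₁,c₂) ρ) x) 0 := by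
    simpa using line_hasDerivAt (hdvρ (c₁,c₂)) c₁ c₂ x 0
  have ha₁ : HasDerivAt (fun s : ℝ => dv (c₁, c₂) A (x.1 + c₁ * s, x.2 + c₂ * s))
      (dv (c₁,c₂) (dv (c₁,c₂) A) x) 0 := by
    simpa using line_hasDerivAt (hdvA (c₁,c₂)) c₁ c₂ x 0
  have hw₁ : HasDerivAt (fun s : ℝ => dv (c₁+1, c₂) A (x.1 + (c₁+1) * s, x.2 + c₂ * s)
        + dv (c₁-1, c₂) A (x.1 + (c₁-1) * s, x.2 + c₂ * s)
        + dv (c₁, c₂+1) A (x.1 + c₁ * s, x.2 + (c₂+1) * s)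
        + dv (c₁, c₂-1) A (x.1 + c₁ * s, x.2 + (c₂-1) * s))
      (dv (c₁+1,c₂) (dv (c₁+1,c₂) A) x + dv (c₁-1,c₂) (dv (c₁-1,c₂) A) x
        + dv (c₁,c₂+1) (dv (c₁,c₂+1) A) x + dv (c₁,c₂-1) (dv (c₁,c₂-1) A) x) 0 := by
    have h1 := line_hasDerivAt (hdvA (c₁+1,c₂)) (c₁+1) c₂ x 0
    have h2 := line_hasDerivAt (hdvA (c₁-1,c₂)) (c₁-1) c₂ x 0
    have h3 := line_hasDerivAt (hdvA (c₁,c₂+1)) c₁ (c₂+1) x 0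
    have h4 := line_hasDerivAt (hdvA (c₁,c₂-1)) c₁ (c₂-1) x 0
    have := ((h1.fun_add h2).fun_add h3).fun_add h4
    simpa using this
  have hApx := (hApos x).ne'
  refine ⟨_, _, fun h => rfl,
    fun h => gen1 D (A x) _ _ _ _ _ _ hu ha hw hwne h, ?_, ?_⟩
  · show A x * _ = _
    norm_num
    left
    rw [show A x + A x + A x + A x = 4 * A x by ring]
  · have := gen2 D (A x) _ _ _ _ _ _
      (dv (c₁,c₂) (dv (c₁,c₂) ρ) x) (dv (c₁,c₂) (dv (c₁,c₂) A) x)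
      (dv (c₁+1,c₂) (dv (c₁+1,c₂) A) x + dv (c₁-1,c₂) (dv (c₁-1,c₂) A) x
        + dv (c₁,c₂+1) (dv (c₁,c₂+1) A) x + dv (c₁,c₂-1) (dv (c₁,c₂-1) A) x)
      hu ha hw hwne hu₁ ha₁ hw₁ hD
    convert this using 1
    norm_num
    left
    rw [show A x + A x + A x + A x = 4 * A x by ring]

lemma dv_dv (F : ℝ × ℝ → ℝ) (x : ℝ × ℝ) (h1 : DifferentiableAt ℝ (pd1 F) x)
    (h2 : DifferentiableAt ℝ (pd2 F) x) (b₁ b₂ c₁ c₂ : ℝ) :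
    dv (b₁,b₂) (dv (c₁,c₂) F) x
      = b₁*(c₁*pd1 (pd1 F) x + c₂*pd1 (pd2 F) x) + b₂*(c₁*pd2 (pd1 F) x + c₂*pd2 (pd2 F) x) := by
  have hfun : dv (c₁,c₂) F = fun y => c₁ * pd1 F y + c₂ * pd2 F y :=
    funext fun y => dv_eval c₁ c₂ F y
  rw [hfun, dv_eval]
  have e : ∀ v : ℝ × ℝ, dv v (fun y => c₁ * pd1 F y + c₂ * pd2 F y) x
      = c₁ * dv v (pd1 F) x + c₂ * dv v (pd2 F) x := by
    intro v
    rw [dv_add v (h1.const_mul c₁) (h2.const_mul c₂), dv_const_mul v c₁ h1,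
      dv_const_mul v c₂ h2]
  have k1 : pd1 (fun y => c₁ * pd1 F y + c₂ * pd2 F y) x
      = c₁ * pd1 (pd1 F) x + c₂ * pd1 (pd2 F) x := e ((1:ℝ),(0:ℝ))
  have k2 : pd2 (fun y => c₁ * pd1 F y + c₂ * pd2 F y) x
      = c₁ * pd2 (pd1 F) x + c₂ * pd2 (pd2 F) x := e ((0:ℝ),(1:ℝ))
  rw [k1, k2]

lemma dv_prod_part (v : ℝ × ℝ) {ρ A g : ℝ × ℝ → ℝ} {x : ℝ × ℝ}
    (hρ : DifferentiableAt ℝ ρ x) (hA : DifferentiableAt ℝ A x)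
    (hg : DifferentiableAt ℝ g x) (hAx : A x ≠ 0) :
    dv v (fun y => 2 * ρ y / A y * g y) x
      = (2 * dv v ρ x * A x - 2 * ρ x * dv v A x) / (A x)^2 * g x
        + 2 * ρ x / A x * dv v g x := by
  have h1 : (fun y => 2 * ρ y / A y * g y) = fun y => 2 * ρ y * (A y)⁻¹ * g y := by
    funext y; rw [div_eq_mul_inv]
  rw [h1]
  rw [dv_mul (f := fun y => 2 * ρ y * (A y)⁻¹) (g := g) v ((hρ.const_mul 2).mul (hA.inv hAx)) hg]
  rw [dv_mul (f := fun y => 2 * ρ y) (g := fun y => (A y)⁻¹) v (hρ.const_mul 2) (hA.inv hAx)]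
  rw [dv_const_mul v 2 hρ, dv_inv v hA hAx]
  field_simp
  ring


set_option maxHeartbeats 2000000

/-- Mean-field limit of the agent-based criminal-number update: with `h = √(DΔt)`,
`T_h(y) = Σ_{j∈{±1,±2}} A(y + h e_j)`, and one-step update
`ρ⁺_Δt(x) = A(x)·Σ_{i∈{±1,±2}} ρ(x+he_i) e^{−A(x+he_i)Δt}/T_h(x+he_i) + γΔt`,
the increment quotient tends, as `Δt → 0⁺`, to
`(D/4)∇·(∇ρ − (2ρ/A)∇A)(x) − ρ(x)A(x) + γ`. -/
theorem stmt5 (D γ : ℝ) (hD : 0 < D)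
    (A ρ : ℝ × ℝ → ℝ) (hA : ContDiff ℝ 3 A) (hρ : ContDiff ℝ 3 ρ)
    (hApos : ∀ x, 0 < A x)
    (T : ℝ → (ℝ × ℝ) → ℝ)
    (hT : T = fun h y =>
      A (y.1 + h, y.2) + A (y.1 - h, y.2) + A (y.1, y.2 + h) + A (y.1, y.2 - h))
    (ρplus : ℝ → (ℝ × ℝ) → ℝ)
    (hρplus : ρplus = fun Δt x =>
      A x * (ρ (x.1 + Real.sqrt (D * Δt), x.2)
                * Real.exp (-A (x.1 + Real.sqrt (D * Δt), x.2) * Δt)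
                / T (Real.sqrt (D * Δt)) (x.1 + Real.sqrt (D * Δt), x.2)
           + ρ (x.1 - Real.sqrt (D * Δt), x.2)
                * Real.exp (-A (x.1 - Real.sqrt (D * Δt), x.2) * Δt)
                / T (Real.sqrt (D * Δt)) (x.1 - Real.sqrt (D * Δt), x.2)
           + ρ (x.1, x.2 + Real.sqrt (D * Δt))
                * Real.exp (-A (x.1, x.2 + Real.sqrt (D * Δt)) * Δt)
                / T (Real.sqrt (D * Δt)) (x.1, x.2 + Real.sqrt (D * Δt))
           + ρ (x.1, x.2 - Real.sqrt (D * Δt))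
                * Real.exp (-A (x.1, x.2 - Real.sqrt (D * Δt)) * Δt)
                / T (Real.sqrt (D * Δt)) (x.1, x.2 - Real.sqrt (D * Δt)))
        + γ * Δt)
    (x : ℝ × ℝ) :
    Filter.Tendsto (fun Δt : ℝ => (ρplus Δt x - ρ x) / Δt)
      (nhdsWithin (0 : ℝ) (Set.Ioi 0))
      (nhds (D / 4 *
          (pd1 (fun y => pd1 ρ y - 2 * ρ y / A y * pd1 A y) x
            + pd2 (fun y => pd2 ρ y - 2 * ρ y / A y * pd2 A y) x)
        - ρ x * A x + γ)) := by
  have hDne : D ≠ 0 := hD.ne'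
  have hAx : A x ≠ 0 := (hApos x).ne'
  have hAd : Differentiable ℝ A := hA.differentiable (by norm_num)
  have hρd : Differentiable ℝ ρ := hρ.differentiable (by norm_num)
  obtain ⟨Fa, Fa₁, hFa, hFa', hFa₁0, hFa₁⟩ := dirterm D hDne A ρ hA hρ hApos x 1 0
  obtain ⟨Fb, Fb₁, hFb, hFb', hFb₁0, hFb₁⟩ := dirterm D hDne A ρ hA hρ hApos x (-1) 0
  obtain ⟨Fc, Fc₁, hFc, hFc', hFc₁0, hFc₁⟩ := dirterm D hDne A ρ hA hρ hApos x 0 1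
  obtain ⟨Fd, Fd₁, hFd, hFd', hFd₁0, hFd₁⟩ := dirterm D hDne A ρ hA hρ hApos x 0 (-1)
  set Φ : ℝ → ℝ := fun h => Fa h + Fb h + Fc h + Fd h with hΦdef
  set Φ₁ : ℝ → ℝ := fun h => Fa₁ h + Fb₁ h + Fc₁ h + Fd₁ h with hΦ₁def
  have hΦ : ∀ h, HasDerivAt Φ (Φ₁ h) h := fun h =>
    (((hFa' h).add (hFb' h)).add (hFc' h)).add (hFd' h)
  have hΦ0 : Φ 0 = ρ x := by
    rw [hΦdef]
    simp only [hFa 0, hFb 0, hFc 0, hFd 0]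
    norm_num
    rw [show A x + A x + A x + A x = 4 * A x by ring]
    field_simp
    ring
  have hΦ₁0 : Φ₁ 0 = 0 := by
    rw [hΦ₁def]
    simp only [hFa₁0, hFb₁0, hFc₁0, hFd₁0]
    simp only [dv_eval]
    field_simp
    ring
  have hM := ((hFa₁.add hFb₁).add hFc₁).add hFd₁
  set M := (A x * ((dv (1,0) (dv (1,0) ρ) x - ρ x * (2 * A x / D)) / (4 * A x)
          - 2 * dv (1,0) ρ x *
            (dv (1+1,0) A x + dv (1-1,0) A x + dv (1,0+1) A x + dv (1,0-1) A x)
            / (4 * A x)^2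
          - ρ x * (dv (1+1,0) (dv (1+1,0) A) x + dv (1-1,0) (dv (1-1,0) A) x
              + dv (1,0+1) (dv (1,0+1) A) x + dv (1,0-1) (dv (1,0-1) A) x)
            / (4 * A x)^2
          + 2 * ρ x *
            (dv (1+1,0) A x + dv (1-1,0) A x + dv (1,0+1) A x + dv (1,0-1) A x)^2
            / (4 * A x)^3)
      + A x * ((dv (-1,0) (dv (-1,0) ρ) x - ρ x * (2 * A x / D)) / (4 * A x)
          - 2 * dv (-1,0) ρ x *
            (dv (-1+1,0) A x + dv (-1-1,0) A x + dv (-1,0+1) A x + dv (-1,0-1) A x)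
            / (4 * A x)^2
          - ρ x * (dv (-1+1,0) (dv (-1+1,0) A) x + dv (-1-1,0) (dv (-1-1,0) A) x
              + dv (-1,0+1) (dv (-1,0+1) A) x + dv (-1,0-1) (dv (-1,0-1) A) x)
            / (4 * A x)^2
          + 2 * ρ x *
            (dv (-1+1,0) A x + dv (-1-1,0) A x + dv (-1,0+1) A x + dv (-1,0-1) A x)^2
            / (4 * A x)^3)
      + A x * ((dv (0,1) (dv (0,1) ρ) x - ρ x * (2 * A x / D)) / (4 * A x)
          - 2 * dv (0,1) ρ x *
            (dv (0+1,1) A x + dv (0-1,1) A x + dv (0,1+1) A x + dv (0,1-1) A x)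
            / (4 * A x)^2
          - ρ x * (dv (0+1,1) (dv (0+1,1) A) x + dv (0-1,1) (dv (0-1,1) A) x
              + dv (0,1+1) (dv (0,1+1) A) x + dv (0,1-1) (dv (0,1-1) A) x)
            / (4 * A x)^2
          + 2 * ρ x *
            (dv (0+1,1) A x + dv (0-1,1) A x + dv (0,1+1) A x + dv (0,1-1) A x)^2
            / (4 * A x)^3)
      + A x * ((dv (0,-1) (dv (0,-1) ρ) x - ρ x * (2 * A x / D)) / (4 * A x)
          - 2 * dv (0,-1) ρ x *
            (dv (0+1,-1) A x + dv (0-1,-1) A x + dv (0,-1+1) A x + dv (0,-1-1) A x)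
            / (4 * A x)^2
          - ρ x * (dv (0+1,-1) (dv (0+1,-1) A) x + dv (0-1,-1) (dv (0-1,-1) A) x
              + dv (0,-1+1) (dv (0,-1+1) A) x + dv (0,-1-1) (dv (0,-1-1) A) x)
            / (4 * A x)^2
          + 2 * ρ x *
            (dv (0+1,-1) A x + dv (0-1,-1) A x + dv (0,-1+1) A x + dv (0,-1-1) A x)^2
            / (4 * A x)^3)) with hMdef
  have hMM : HasDerivAt Φ₁ M 0 := hM
  have hslope : Filter.Tendsto (fun h : ℝ => Φ₁ h / (2*h)) (nhdsWithin 0 (Set.Ioi 0))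
      (nhds (M/2)) := by
    have h1 := hasDerivAt_iff_tendsto_slope.mp hMM
    have h2 : Filter.Tendsto (slope Φ₁ 0) (nhdsWithin 0 (Set.Ioi 0)) (nhds M) :=
      h1.mono_left (nhdsWithin_mono 0 (fun y hy => ne_of_gt hy))
    have h3 := h2.div_const 2
    refine Filter.Tendsto.congr (fun h => ?_) h3
    simp [slope, hΦ₁0, div_eq_mul_inv, mul_inv, mul_comm, mul_assoc, mul_left_comm]
  have hlim1 : Filter.Tendsto (fun h : ℝ => (Φ h - ρ x)/h^2) (nhdsWithin 0 (Set.Ioi 0))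
      (nhds (M/2)) := by
    apply HasDerivAt.lhopital_zero_nhdsGT (f' := Φ₁) (g' := fun h : ℝ => 2*h)
    · exact Filter.Eventually.of_forall fun h => (hΦ h).sub_const (ρ x)
    · exact Filter.Eventually.of_forall fun h => by simpa using hasDerivAt_pow 2 h
    · filter_upwards [self_mem_nhdsWithin] with h hh
      exact mul_ne_zero two_ne_zero (ne_of_gt hh)
    · have hc : ContinuousAt Φ 0 := (hΦ 0).continuousAt
      have h6 : Filter.Tendsto Φ (nhdsWithin 0 (Set.Ioi 0)) (nhds (Φ 0)) :=
        hc.tendsto.mono_left nhdsWithin_le_nhds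
      have := h6.sub_const (ρ x)
      rwa [hΦ0, sub_self] at this
    · have h4 : Filter.Tendsto (fun h : ℝ => h^2) (nhds 0) (nhds 0) := by
        simpa using (continuous_pow 2).tendsto (0:ℝ)
      exact h4.mono_left nhdsWithin_le_nhds
    · exact hslope
  have hsqrt : Filter.Tendsto (fun Δt : ℝ => Real.sqrt (D*Δt)) (nhdsWithin 0 (Set.Ioi 0))
      (nhdsWithin 0 (Set.Ioi 0)) := by
    rw [tendsto_nhdsWithin_iff]
    constructor
    · have h5 : Filter.Tendsto (fun Δt : ℝ => Real.sqrt (D*Δt)) (nhds 0)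
          (nhds (Real.sqrt (D*0))) :=
        (Real.continuous_sqrt.comp (continuous_const.mul continuous_id)).tendsto 0
      simpa using h5.mono_left nhdsWithin_le_nhds
    · filter_upwards [self_mem_nhdsWithin] with Δt ht
      exact Real.sqrt_pos.mpr (mul_pos hD ht)
  have hcomp := hlim1.comp hsqrt
  have hfin := (hcomp.const_mul D).add_const γ
  have heq : ∀ᶠ Δt in nhdsWithin (0:ℝ) (Set.Ioi 0),
      D * ((Φ (Real.sqrt (D*Δt)) - ρ x) / (Real.sqrt (D*Δt))^2) + γ
        = (ρplus Δt x - ρ x) / Δt := by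
    filter_upwards [self_mem_nhdsWithin] with Δt ht
    have htpos : (0:ℝ) < Δt := ht
    have hs2 : (Real.sqrt (D*Δt))^2 = D*Δt := Real.sq_sqrt (mul_pos hD htpos).le
    have hsD : (Real.sqrt (D*Δt))^2/D = Δt := by rw [hs2]; field_simp
    have hterm : Φ (Real.sqrt (D*Δt)) = ρplus Δt x - γ * Δt := by
      rw [hρplus, hT, hΦdef]
      simp only [hFa, hFb, hFc, hFd]
      rw [hsD]
      ring_nf
    rw [hterm, hs2]
    field_simp
    ring
  have hA3 : ContDiff ℝ ((2:ℕ)+1 : ℕ) A := by exact_mod_cast hA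
  have hρ3 : ContDiff ℝ ((2:ℕ)+1 : ℕ) ρ := by exact_mod_cast hρ
  have hd1A : DifferentiableAt ℝ (pd1 A) x :=
    ((dv_contDiff (n := 2) ((1:ℝ),(0:ℝ)) hA3).differentiable (by norm_num)) x
  have hd2A : DifferentiableAt ℝ (pd2 A) x :=
    ((dv_contDiff (n := 2) ((0:ℝ),(1:ℝ)) hA3).differentiable (by norm_num)) x
  have hd1ρ : DifferentiableAt ℝ (pd1 ρ) x :=
    ((dv_contDiff (n := 2) ((1:ℝ),(0:ℝ)) hρ3).differentiable (by norm_num)) x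
  have hd2ρ : DifferentiableAt ℝ (pd2 ρ) x :=
    ((dv_contDiff (n := 2) ((0:ℝ),(1:ℝ)) hρ3).differentiable (by norm_num)) x
  have hq : DifferentiableAt ℝ (fun y => 2 * ρ y / A y) x := by
    have he : (fun y : ℝ × ℝ => 2 * ρ y / A y) = fun y => 2 * ρ y * (A y)⁻¹ :=
      funext fun y => div_eq_mul_inv _ _
    rw [he]
    exact ((hρd x).const_mul 2).mul ((hAd x).inv hAx)
  have hexp1 : pd1 (fun y => pd1 ρ y - 2 * ρ y / A y * pd1 A y) x
      = pd1 (pd1 ρ) x - ((2 * dv (1,0) ρ x * A x - 2 * ρ x * dv (1,0) A x)/(A x)^2 * pd1 A x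
          + 2 * ρ x / A x * dv (1,0) (pd1 A) x) := by
    show dv ((1:ℝ),(0:ℝ)) _ x = _
    rw [dv_sub (f := pd1 ρ) (g := fun y => 2 * ρ y / A y * pd1 A y) ((1:ℝ),(0:ℝ)) hd1ρ (hq.mul hd1A),
      dv_prod_part ((1:ℝ),(0:ℝ)) (hρd x) (hAd x) hd1A hAx]
    rfl
  have hexp2 : pd2 (fun y => pd2 ρ y - 2 * ρ y / A y * pd2 A y) x
      = pd2 (pd2 ρ) x - ((2 * dv (0,1) ρ x * A x - 2 * ρ x * dv (0,1) A x)/(A x)^2 * pd2 A x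
          + 2 * ρ x / A x * dv (0,1) (pd2 A) x) := by
    show dv ((0:ℝ),(1:ℝ)) _ x = _
    rw [dv_sub (f := pd2 ρ) (g := fun y => 2 * ρ y / A y * pd2 A y) ((0:ℝ),(1:ℝ)) hd2ρ (hq.mul hd2A),
      dv_prod_part ((0:ℝ),(1:ℝ)) (hρd x) (hAd x) hd2A hAx]
    rfl
  have hval : D * (M/2) + γ = D / 4 *
          (pd1 (fun y => pd1 ρ y - 2 * ρ y / A y * pd1 A y) x
            + pd2 (fun y => pd2 ρ y - 2 * ρ y / A y * pd2 A y) x)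
        - ρ x * A x + γ := by
    rw [hexp1, hexp2, hMdef]
    simp only [dv_dv ρ x hd1ρ hd2ρ, dv_dv A x hd1A hd2A]
    simp only [dv_eval]
    field_simp
    ring
  have hfin2 := hfin.congr' heq
  rwa [hval] at hfin2
end
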